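/- Let T > 0 be a real number. For every real a with a·T < 1, there exists a unique real number k with k > |a| satisfying T·√(k² − a²) = arccos(a/k). -/

import Mathlib

open Real

noncomputable def phiAux (T a k : ℝ) : ℝ :=
  T * Real.sqrt (k ^ 2 - a ^ 2) - Real.arccos (a / k)

lemma phiAux_hasDerivAt {T a k : ℝ} (hk : |a| < k) :
    HasDerivAt (phiAux T a)
      ((T * k ^ 2 - a) / (k * Real.sqrt (k ^ 2 - a ^ 2))) k := by
  have hk0 : 0 < k := lt_of_le_of_lt (abs_nonneg a) hk
  obtain ⟨hka, hak⟩ := abs_lt.mp hk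
  have hlt : a ^ 2 < k ^ 2 := sq_lt_sq' hka hak
  have hpos : 0 < k ^ 2 - a ^ 2 := by linarith
  have hs : 0 < Real.sqrt (k ^ 2 - a ^ 2) := Real.sqrt_pos.mpr hpos
  have habs : |a / k| < 1 := by
    rw [abs_div, abs_of_pos hk0]
    exact (div_lt_one hk0).mpr hk
  obtain ⟨h₁', h₂'⟩ := abs_lt.mp habs
  have hd1 : HasDerivAt (fun x : ℝ => x ^ 2 - a ^ 2) (2 * k) k := by
    simpa using (hasDerivAt_pow 2 k).sub_const (a ^ 2)
  have hd2 := (hd1.sqrt (ne_of_gt hpos)).const_mul T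
  have hd4 : HasDerivAt (fun x : ℝ => a / x) (a * -((k ^ 2)⁻¹)) k := by
    simpa [div_eq_mul_inv] using (hasDerivAt_inv (ne_of_gt hk0)).const_mul a
  have hd5 : HasDerivAt (fun x : ℝ => Real.arccos (a / x))
      (-(1 / Real.sqrt (1 - (a / k) ^ 2)) * (a * -((k ^ 2)⁻¹))) k :=
    (Real.hasDerivAt_arccos (ne_of_gt h₁') (ne_of_lt h₂')).comp k hd4
  have h := hd2.sub hd5
  refine HasDerivAt.congr_deriv (f := phiAux T a) h ?_
  have h1k : Real.sqrt (1 - (a / k) ^ 2) = Real.sqrt (k ^ 2 - a ^ 2) / k := by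
    rw [show 1 - (a / k) ^ 2 = (k ^ 2 - a ^ 2) / k ^ 2 by field_simp,
      Real.sqrt_div hpos.le, Real.sqrt_sq hk0.le]
  rw [h1k]
  field_simp

set_option maxHeartbeats 2000000 in
theorem stmt0 (T : ℝ) (hT : 0 < T) :
    ∀ a : ℝ, a * T < 1 →
      ∃! k : ℝ, |a| < k ∧ T * Real.sqrt (k ^ 2 - a ^ 2) = Real.arccos (a / k) := by
  intro a ha
  rcases eq_or_ne a 0 with rfl | ha0
  · -- a = 0 : unique solution k = π / (2 T)
    have hk0 : (0:ℝ) < π / (2 * T) := by positivity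
    refine ⟨π / (2 * T), ⟨by simpa using hk0, ?_⟩, ?_⟩
    · have h1 : Real.sqrt ((π / (2 * T)) ^ 2 - 0 ^ 2) = π / (2 * T) := by
        rw [show (π / (2 * T)) ^ 2 - 0 ^ 2 = (π / (2 * T)) ^ 2 by ring,
          Real.sqrt_sq hk0.le]
      rw [h1, zero_div, Real.arccos_zero]
      field_simp
    · rintro k ⟨hk1, hk2⟩
      have hkpos : 0 < k := by simpa using hk1
      have h1 : Real.sqrt (k ^ 2 - 0 ^ 2) = k := by
        rw [show k ^ 2 - 0 ^ 2 = k ^ 2 by ring, Real.sqrt_sq hkpos.le]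
      rw [h1, zero_div, Real.arccos_zero] at hk2
      field_simp
      linarith
  · -- a ≠ 0
    have haa : 0 < |a| := abs_pos.mpr ha0
    set c : ℝ := Real.sqrt (max (a / T) (a ^ 2)) with hc_def
    have hmax0 : 0 ≤ max (a / T) (a ^ 2) := le_trans (sq_nonneg a) (le_max_right _ _)
    have hcsq : c ^ 2 = max (a / T) (a ^ 2) := Real.sq_sqrt hmax0
    have hca : |a| ≤ c := by
      rw [hc_def, ← Real.sqrt_sq_eq_abs]
      exact Real.sqrt_le_sqrt (le_max_right _ _)
    have hc0 : 0 < c := lt_of_lt_of_le haa hca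
    clear_value c
    -- continuity of phiAux away from 0
    have hcont : ∀ s : Set ℝ, (∀ x ∈ s, x ≠ 0) → ContinuousOn (phiAux T a) s := by
      intro s hs
      exact ((continuous_const.mul
        (((continuous_pow 2).sub continuous_const).sqrt)).continuousOn).sub
        (Real.continuous_arccos.comp_continuousOn
          (continuousOn_const.div continuousOn_id hs))
    -- strict monotonicity on [c, ∞)
    have hmono : StrictMonoOn (phiAux T a) (Set.Ici c) := by
      apply strictMonoOn_of_deriv_pos (convex_Ici c)
        (hcont _ fun x hx => ne_of_gt (lt_of_lt_of_le hc0 hx))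
      intro x hx
      rw [interior_Ici] at hx
      have hxa : |a| < x := lt_of_le_of_lt hca hx
      have hx0 : 0 < x := lt_of_le_of_lt (abs_nonneg a) hxa
      rw [(phiAux_hasDerivAt hxa).deriv]
      obtain ⟨h1', h2'⟩ := abs_lt.mp hxa
      have hpos : 0 < x ^ 2 - a ^ 2 := by nlinarith [sq_lt_sq' h1' h2']
      apply div_pos
      · have h1 : a / T ≤ c ^ 2 := hcsq ▸ le_max_left _ _
        have hcx : c < x := hx
        have h2 : c ^ 2 < x ^ 2 := by nlinarith
        have : a / T < x ^ 2 := lt_of_le_of_lt h1 h2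
        have := (div_lt_iff₀ hT).mp this
        linarith
      · exact mul_pos hx0 (Real.sqrt_pos.mpr hpos)
    -- phiAux at c is negative, and all roots lie above c
    have hroot_gt : ∀ k, |a| < k → phiAux T a k = 0 → c < k := by
      intro k hk hk0
      rcases lt_or_gt_of_ne ha0 with hneg | hpos
      · -- a < 0 : c = |a|
        have : c = |a| := by
          rw [hc_def, max_eq_right, Real.sqrt_sq_eq_abs]
          have : a / T < 0 := div_neg_of_neg_of_pos hneg hT
          nlinarith [sq_nonneg a]
        rw [this]; exact hk
      · -- a > 0
        by_contra hle
        push_neg at hle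
        have haT : a ^ 2 < a / T := by
          rw [lt_div_iff₀ hT]; nlinarith
        have hac : a < c := by
          have : a ^ 2 < c ^ 2 := by rw [hcsq]; exact lt_of_lt_of_le haT (le_max_left _ _)
          nlinarith
        have hanti : StrictAntiOn (phiAux T a) (Set.Icc a c) := by
          apply strictAntiOn_of_deriv_neg (convex_Icc a c)
            (hcont _ fun x hx => ne_of_gt (lt_of_lt_of_le hpos hx.1))
          intro x hx
          rw [interior_Icc] at hx
          have hxa : |a| < x := by rw [abs_of_pos hpos]; exact hx.1
          have hx0 : 0 < x := lt_trans hpos hx.1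
          rw [(phiAux_hasDerivAt hxa).deriv]
          obtain ⟨h1', h2'⟩ := abs_lt.mp hxa
          have hps : 0 < x ^ 2 - a ^ 2 := by nlinarith [sq_lt_sq' h1' h2']
          apply div_neg_of_neg_of_pos
          · have hcx : x ^ 2 < c ^ 2 := by nlinarith [hx.2]
            have : x ^ 2 < a / T := by
              rw [hcsq, max_eq_left haT.le] at hcx; exact hcx
            have := (lt_div_iff₀ hT).mp this
            linarith
          · exact mul_pos hx0 (Real.sqrt_pos.mpr hps)
        have hφa : phiAux T a a = 0 := by
          simp [phiAux, div_self ha0, Real.arccos_one]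
        have hka : a < k := by rw [abs_of_pos hpos] at hk; exact hk
        have := hanti (Set.left_mem_Icc.mpr hac.le) ⟨hka.le, hle⟩ hka
        rw [hφa, hk0] at this
        exact lt_irrefl 0 this
    have hφc : phiAux T a c < 0 := by
      rcases lt_or_gt_of_ne ha0 with hneg | hpos
      · have hce : c = |a| := by
          rw [hc_def, max_eq_right, Real.sqrt_sq_eq_abs]
          have : a / T < 0 := div_neg_of_neg_of_pos hneg hT
          nlinarith [sq_nonneg a]
        have : a / c = -1 := by
          rw [hce, abs_of_neg hneg]
          field_simp
        rw [phiAux, this, Real.arccos_neg_one,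
          show c ^ 2 - a ^ 2 = 0 by rw [hce]; rw [sq_abs]; ring, Real.sqrt_zero]
        simpa using Real.pi_pos
      · -- a > 0 : use the strict antitonicity argument
        have haT : a ^ 2 < a / T := by
          rw [lt_div_iff₀ hT]; nlinarith
        have hac : a < c := by
          have : a ^ 2 < c ^ 2 := by rw [hcsq]; exact lt_of_lt_of_le haT (le_max_left _ _)
          nlinarith
        have hanti : StrictAntiOn (phiAux T a) (Set.Icc a c) := by
          apply strictAntiOn_of_deriv_neg (convex_Icc a c)
            (hcont _ fun x hx => ne_of_gt (lt_of_lt_of_le hpos hx.1))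
          intro x hx
          rw [interior_Icc] at hx
          have hxa : |a| < x := by rw [abs_of_pos hpos]; exact hx.1
          have hx0 : 0 < x := lt_trans hpos hx.1
          rw [(phiAux_hasDerivAt hxa).deriv]
          obtain ⟨h1', h2'⟩ := abs_lt.mp hxa
          have hps : 0 < x ^ 2 - a ^ 2 := by nlinarith [sq_lt_sq' h1' h2']
          apply div_neg_of_neg_of_pos
          · have hcx : x ^ 2 < c ^ 2 := by nlinarith [hx.2]
            have : x ^ 2 < a / T := by
              rw [hcsq, max_eq_left haT.le] at hcx; exact hcx
            have := (lt_div_iff₀ hT).mp this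
            linarith
          · exact mul_pos hx0 (Real.sqrt_pos.mpr hps)
        have hφa : phiAux T a a = 0 := by
          simp [phiAux, div_self ha0, Real.arccos_one]
        have := hanti (Set.left_mem_Icc.mpr hac.le) (Set.right_mem_Icc.mpr hac.le) hac
        rw [hφa] at this
        exact this
    -- big point K
    set K : ℝ := Real.sqrt (a ^ 2 + (π / T + 1) ^ 2) with hK_def
    have hb0 : 0 < π / T + 1 := by positivity
    have hK2 : K ^ 2 = a ^ 2 + (π / T + 1) ^ 2 := Real.sq_sqrt (by positivity)
    have hKnn : 0 ≤ K := Real.sqrt_nonneg _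
    clear_value K
    have hKc : c < K := by
      have h1 : c ^ 2 < K ^ 2 := by
        rw [hcsq, hK2]
        apply max_lt
        · have haT' : a / T < 1 / T ^ 2 := by
            rw [div_lt_div_iff₀ hT (by positivity)]
            nlinarith
          have h2 : 1 / T ^ 2 < (π / T + 1) ^ 2 := by
            have hπ : 1 / T < π / T + 1 := by
              have hπ3 : (1:ℝ) < π := by nlinarith [Real.pi_gt_three]
              have : 1 / T < π / T := by gcongr
              linarith
            have h0 : 0 < 1 / T := by positivity
            have he : (1 / T) ^ 2 = 1 / T ^ 2 := by rw [div_pow, one_pow]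
            calc 1 / T ^ 2 = (1 / T) ^ 2 := he.symm
              _ < (π / T + 1) ^ 2 := by nlinarith
          linarith [sq_nonneg a]
        · have : 0 < (π / T + 1) ^ 2 := by positivity
          linarith
      by_contra hle
      push_neg at hle
      nlinarith
    have hφK : 0 < phiAux T a K := by
      have hs : Real.sqrt (K ^ 2 - a ^ 2) = π / T + 1 := by
        rw [show K ^ 2 - a ^ 2 = (π / T + 1) ^ 2 by rw [hK2]; ring,
          Real.sqrt_sq hb0.le]
      have harc : Real.arccos (a / K) ≤ π := Real.arccos_le_pi _
      have : T * (π / T + 1) = π + T := by field_simp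
      rw [phiAux, hs, this]
      linarith
    -- intermediate value theorem
    have hIVT := intermediate_value_Ioo hKc.le
      (hcont (Set.Icc c K) fun x hx => ne_of_gt (lt_of_lt_of_le hc0 hx.1))
    obtain ⟨k, hkmem, hkval⟩ := hIVT ⟨hφc, hφK⟩
    have hka : |a| < k := lt_of_le_of_lt hca hkmem.1
    refine ⟨k, ⟨hka, ?_⟩, ?_⟩
    · have := hkval
      rw [phiAux] at this
      linarith
    · rintro k' ⟨hk'1, hk'2⟩
      have hφk' : phiAux T a k' = 0 := by rw [phiAux]; linarith
      have hck' : c < k' := hroot_gt k' hk'1 hφk'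
      exact hmono.injOn (Set.mem_Ici.mpr hck'.le) (Set.mem_Ici.mpr hkmem.1.le)
        (by rw [hφk', hkval])
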